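/- arXiv:2204.11683 — 4 statements merged into one kernel-verified Lean document; each statement's English description precedes it below -/
import Mathlib

section
/- Let α : Fin m → ℝ and β : Fin n → ℝ be nonnegative weights with ∑_j α_j = 1 and ∑_k β_k = 1, and let p : Fin m → [0,1] and q : Fin n → [0,1]. Then ∑_{j,k} α_j β_k · 2√((p_j⋆q_k)(1−(p_j⋆q_k))) ≥ f(∑_j α_j · 2√(p_j(1−p_j)), ∑_k β_k · 2√(q_k(1−q_k))). (This is the statement that for BMS channels V, W with BSC-decompositions given by these mixtures, Z(V Ｓ W) ≥ f(Z(V), Z(W)).) -/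
/-- The serial-combination crossover probability `p⋆q := p(1−q) + (1−p)q`. -/
def serial (p q : ℝ) : ℝ := p * (1 - q) + (1 - p) * q

/-- The Bhattacharyya parameter of `BSC(p)`, namely `Z(BSC(p)) := 2√(p(1−p))`. -/
noncomputable def bhat (p : ℝ) : ℝ := 2 * Real.sqrt (p * (1 - p))

/-- The function `f(x,y) := √(x² + y² − x²y²)`. -/
noncomputable def fB (x y : ℝ) : ℝ := Real.sqrt (x ^ 2 + y ^ 2 - x ^ 2 * y ^ 2)

lemma bhat_nonneg (p : ℝ) : 0 ≤ bhat p := by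
  unfold bhat; positivity

lemma bhat_le_one {p : ℝ} (hp : p ∈ Set.Icc (0:ℝ) 1) : bhat p ≤ 1 := by
  unfold bhat
  have h1 : Real.sqrt (p * (1 - p)) ≤ Real.sqrt (1/4) :=
    Real.sqrt_le_sqrt (by nlinarith [sq_nonneg (2*p - 1)])
  have h2 : Real.sqrt (1/4 : ℝ) = 1/2 := by
    rw [show (1/4 : ℝ) = (1/2)^2 by norm_num, Real.sqrt_sq (by norm_num)]
  linarith

lemma bhat_sq {p : ℝ} (hp : p ∈ Set.Icc (0:ℝ) 1) : (bhat p)^2 = 4 * (p * (1 - p)) := by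
  unfold bhat
  rw [mul_pow, Real.sq_sqrt (by nlinarith [hp.1, hp.2])]
  ring

lemma bhat_serial {p q : ℝ} (hp : p ∈ Set.Icc (0:ℝ) 1) (hq : q ∈ Set.Icc (0:ℝ) 1) :
    bhat (serial p q) = fB (bhat p) (bhat q) := by
  have h1 : bhat (serial p q) = Real.sqrt (4 * (serial p q * (1 - serial p q))) := by
    unfold bhat
    rw [Real.sqrt_mul (by norm_num : (0:ℝ) ≤ 4),
      show Real.sqrt 4 = 2 by
        rw [show (4:ℝ) = 2^2 by norm_num, Real.sqrt_sq (by norm_num)]]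
  rw [h1]
  unfold fB
  congr 1
  have hx := bhat_sq hp
  have hy := bhat_sq hq
  rw [hx, hy]
  unfold serial
  ring

/-- `x ↦ √(a x² + b)` is convex for `a, b ≥ 0`. -/
lemma sqrt_quad_convex {a b : ℝ} (ha : 0 ≤ a) (hb : 0 ≤ b) :
    ConvexOn ℝ Set.univ (fun x : ℝ => Real.sqrt (a * x ^ 2 + b)) := by
  have key : ∀ x : ℝ, Real.sqrt (a * x ^ 2 + b) = ‖(⟨Real.sqrt a * x, Real.sqrt b⟩ : ℂ)‖ := by
    intro x
    rw [Complex.norm_def, Complex.normSq_mk]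
    congr 1
    have := Real.sq_sqrt ha
    have := Real.sq_sqrt hb
    nlinarith
  refine ⟨convex_univ, ?_⟩
  intro x _ y _ s t hs ht hst
  simp only [key, smul_eq_mul]
  have hz : (⟨Real.sqrt a * (s * x + t * y), Real.sqrt b⟩ : ℂ)
      = s • (⟨Real.sqrt a * x, Real.sqrt b⟩ : ℂ) + t • (⟨Real.sqrt a * y, Real.sqrt b⟩ : ℂ) := by
    apply Complex.ext
    · simp only [Complex.add_re, Complex.smul_re, smul_eq_mul]
      ring
    · simp only [Complex.add_im, Complex.smul_im, smul_eq_mul]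
      linear_combination (-Real.sqrt b) * hst
  rw [hz]
  calc ‖(s • (⟨Real.sqrt a * x, Real.sqrt b⟩ : ℂ)
          + t • (⟨Real.sqrt a * y, Real.sqrt b⟩ : ℂ))‖
        ≤ ‖(s • (⟨Real.sqrt a * x, Real.sqrt b⟩ : ℂ))‖
          + ‖(t • (⟨Real.sqrt a * y, Real.sqrt b⟩ : ℂ))‖ := norm_add_le _ _
      _ = s * ‖(⟨Real.sqrt a * x, Real.sqrt b⟩ : ℂ)‖
          + t * ‖(⟨Real.sqrt a * y, Real.sqrt b⟩ : ℂ)‖ := by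
          rw [norm_smul, norm_smul, Real.norm_eq_abs, Real.norm_eq_abs,
            abs_of_nonneg hs, abs_of_nonneg ht]

/-- For fixed `y ∈ [0,1]`, `x ↦ fB x y` is convex. -/
lemma fB_convex_left {y : ℝ} (hy : y ∈ Set.Icc (0:ℝ) 1) :
    ConvexOn ℝ Set.univ (fun x : ℝ => fB x y) := by
  have ha : (0:ℝ) ≤ 1 - y^2 := by nlinarith [hy.1, hy.2]
  have := sqrt_quad_convex ha (sq_nonneg y)
  convert this using 2 with x
  unfold fB
  ring_nf

lemma fB_comm (x y : ℝ) : fB x y = fB y x := by unfold fB; ring_nf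

/-- For BMS channels `V, W` with BSC-decompositions `∑ α_j BSC(p_j)` and `∑ β_k BSC(q_k)`,
one has `Z(V Ｓ W) ≥ f(Z(V), Z(W))`. -/
theorem stmt_4 (m n : ℕ) (α : Fin m → ℝ) (β : Fin n → ℝ)
    (hα : ∀ j, 0 ≤ α j) (hβ : ∀ k, 0 ≤ β k)
    (hαsum : ∑ j, α j = 1) (hβsum : ∑ k, β k = 1)
    (p : Fin m → ℝ) (q : Fin n → ℝ)
    (hp : ∀ j, p j ∈ Set.Icc (0 : ℝ) 1) (hq : ∀ k, q k ∈ Set.Icc (0 : ℝ) 1) :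
    ∑ j, ∑ k, α j * β k * bhat (serial (p j) (q k))
      ≥ fB (∑ j, α j * bhat (p j)) (∑ k, β k * bhat (q k)) := by
  set Y := ∑ k, β k * bhat (q k) with hY
  have hYmem : Y ∈ Set.Icc (0:ℝ) 1 := by
    constructor
    · apply Finset.sum_nonneg; intro k _; exact mul_nonneg (hβ k) (bhat_nonneg _)
    · have h1 : Y ≤ ∑ k, β k * 1 := by
        apply Finset.sum_le_sum; intro k _
        exact mul_le_mul_of_nonneg_left (bhat_le_one (hq k)) (hβ k)
      have h2 : ∑ k, β k * 1 = 1 := by simp only [mul_one]; exact hβsum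
      linarith
  -- step 1: inner Jensen
  have step1 : ∀ j, fB (bhat (p j)) Y ≤ ∑ k, β k * fB (bhat (p j)) (bhat (q k)) := by
    intro j
    have hx : bhat (p j) ∈ Set.Icc (0:ℝ) 1 := ⟨bhat_nonneg _, bhat_le_one (hp j)⟩
    have hconv : ConvexOn ℝ Set.univ (fun y : ℝ => fB (bhat (p j)) y) := by
      have := fB_convex_left hx
      convert this using 2 with y
      exact fB_comm _ _
    have := hconv.map_sum_le (t := Finset.univ) (w := β) (p := fun k => bhat (q k))
      (fun k _ => hβ k) hβsum (fun k _ => trivial)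
    simpa [smul_eq_mul] using this
  -- step 2: outer Jensen
  have step2 : fB (∑ j, α j * bhat (p j)) Y ≤ ∑ j, α j * fB (bhat (p j)) Y := by
    have hconv := fB_convex_left hYmem
    have := hconv.map_sum_le (t := Finset.univ) (w := α) (p := fun j => bhat (p j))
      (fun j _ => hα j) hαsum (fun j _ => trivial)
    simpa [smul_eq_mul] using this
  have main : fB (∑ j, α j * bhat (p j)) Y
      ≤ ∑ j, ∑ k, α j * β k * fB (bhat (p j)) (bhat (q k)) := by
    calc fB (∑ j, α j * bhat (p j)) Y ≤ ∑ j, α j * fB (bhat (p j)) Y := step2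
      _ ≤ ∑ j, α j * ∑ k, β k * fB (bhat (p j)) (bhat (q k)) := by
          apply Finset.sum_le_sum; intro j _
          exact mul_le_mul_of_nonneg_left (step1 j) (hα j)
      _ = ∑ j, ∑ k, α j * β k * fB (bhat (p j)) (bhat (q k)) := by
          apply Finset.sum_congr rfl; intro j _
          rw [Finset.mul_sum]; apply Finset.sum_congr rfl; intro k _; ring
  rw [ge_iff_le]
  calc fB (∑ j, α j * bhat (p j)) Y
      ≤ ∑ j, ∑ k, α j * β k * fB (bhat (p j)) (bhat (q k)) := main
    _ = ∑ j, ∑ k, α j * β k * bhat (serial (p j) (q k)) := by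
        apply Finset.sum_congr rfl; intro j _
        apply Finset.sum_congr rfl; intro k _
        rw [bhat_serial (hp j) (hq k)]
end

section
/- Let α : Fin m → ℝ and β : Fin n → ℝ be nonnegative weights with ∑_j α_j = 1 and ∑_k β_k = 1, and let p : Fin m → (0,1) and q : Fin n → (0,1). For each pair (j,k) set a_{jk} := p_j(1−q_k)/(p_j⋆q_k) and b_{jk} := p_j q_k/(1−(p_j⋆q_k)). Then ∑_{j,k} α_j β_k [ (p_j⋆q_k) · 2√(a_{jk}(1−a_{jk})) + (1−(p_j⋆q_k)) · 2√(b_{jk}(1−b_{jk})) ] = (∑_j α_j · 2√(p_j(1−p_j))) · (∑_k β_k · 2√(q_k(1−q_k))). (This is the statement that for all BMS channels V, W, Z(V Ｐ W) = Z(V)·Z(W).) -/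
/-- For BMS channels `V, W` with BSC-decompositions `∑ α_j BSC(p_j)` and `∑ β_k BSC(q_k)`,
the parallel combination (extended bi-linearly from
`BSC(p) Ｐ BSC(q) := (p⋆q)·BSC(p(1−q)/(p⋆q)) + (1−(p⋆q))·BSC(pq/(1−(p⋆q)))`)
satisfies `Z(V Ｐ W) = Z(V)·Z(W)`. -/
theorem stmt_8 (m n : ℕ) (α : Fin m → ℝ) (β : Fin n → ℝ)
    (hα : ∀ j, 0 ≤ α j) (hβ : ∀ k, 0 ≤ β k)
    (hαsum : ∑ j, α j = 1) (hβsum : ∑ k, β k = 1)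
    (p : Fin m → ℝ) (q : Fin n → ℝ)
    (hp : ∀ j, p j ∈ Set.Ioo (0 : ℝ) 1) (hq : ∀ k, q k ∈ Set.Ioo (0 : ℝ) 1)
    (a b : Fin m → Fin n → ℝ)
    (ha : ∀ j k, a j k = p j * (1 - q k) / serial (p j) (q k))
    (hb : ∀ j k, b j k = p j * q k / (1 - serial (p j) (q k))) :
    ∑ j, ∑ k, α j * β k *
        (serial (p j) (q k) * (2 * Real.sqrt (a j k * (1 - a j k)))
          + (1 - serial (p j) (q k)) * (2 * Real.sqrt (b j k * (1 - b j k))))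
      = (∑ j, α j * bhat (p j)) * (∑ k, β k * bhat (q k)) := by
  have key : ∀ j k,
      serial (p j) (q k) * (2 * Real.sqrt (a j k * (1 - a j k)))
        + (1 - serial (p j) (q k)) * (2 * Real.sqrt (b j k * (1 - b j k)))
      = bhat (p j) * bhat (q k) := by
    intro j k
    obtain ⟨hp0, hp1⟩ := hp j
    obtain ⟨hq0, hq1⟩ := hq k
    set P := p j with hP
    set Q := q k with hQ
    have hs : 0 < serial P Q := by unfold serial; nlinarith
    have hs1 : 0 < 1 - serial P Q := by unfold serial; nlinarith
    have hX : (0:ℝ) ≤ P * (1 - P) * (Q * (1 - Q)) :=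
      mul_nonneg (mul_nonneg hp0.le (by linarith)) (mul_nonneg hq0.le (by linarith))
    have e1 : a j k * (1 - a j k) = (P * (1 - P) * (Q * (1 - Q))) / (serial P Q)^2 := by
      rw [ha, ← hP, ← hQ]
      field_simp
      unfold serial
      ring
    have e2 : b j k * (1 - b j k) = (P * (1 - P) * (Q * (1 - Q))) / (1 - serial P Q)^2 := by
      rw [hb, ← hP, ← hQ]
      field_simp
      unfold serial
      ring
    rw [e1, e2]
    rw [show (serial P Q)^2 = (serial P Q) * (serial P Q) by ring,
        show (1 - serial P Q)^2 = (1 - serial P Q) * (1 - serial P Q) by ring,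
]
    rw [Real.sqrt_div hX, Real.sqrt_div hX,
        Real.sqrt_mul_self hs.le, Real.sqrt_mul_self hs1.le]
    have h2 : Real.sqrt (P * (1 - P) * (Q * (1 - Q)))
        = Real.sqrt (P * (1 - P)) * Real.sqrt (Q * (1 - Q)) :=
      Real.sqrt_mul (mul_nonneg hp0.le (by linarith)) _
    unfold bhat
    rw [h2]
    field_simp
    ring
  calc ∑ j, ∑ k, α j * β k *
        (serial (p j) (q k) * (2 * Real.sqrt (a j k * (1 - a j k)))
          + (1 - serial (p j) (q k)) * (2 * Real.sqrt (b j k * (1 - b j k))))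
      = ∑ j, ∑ k, (α j * bhat (p j)) * (β k * bhat (q k)) := by
        refine Finset.sum_congr rfl fun j _ => Finset.sum_congr rfl fun k _ => ?_
        rw [key j k]; ring
    _ = (∑ j, α j * bhat (p j)) * (∑ k, β k * bhat (q k)) := by
        rw [Finset.sum_mul_sum]
end

section
/- Let p, q, r be real numbers with 0 ≤ p ≤ 1/2, 0 ≤ q ≤ 1/2, 0 ≤ r ≤ 1/2. Write p̄ := 1−p, q̄ := 1−q, r̄ := 1−r, and set x := 2√(p p̄), y := 2√(q q̄), z := 2√(r r̄). Define C := (x²y² + (1−x²)z² + (1−y²)z²)/4 and D := (√(1−x²) · √(1−y²) · z²)/2. Then 2√((p q̄ r̄ + p̄ q r)(p q̄ r + p̄ q r̄)) + 2√((p q r̄ + p̄ q̄ r)(p q r + p̄ q̄ r̄)) = √(C + D) + √(C − D). In particular C + D ≥ 0 and C − D ≥ 0. -/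
/-- The Bhattacharyya parameter of `(BSC(p) Ｐ BSC(q)) Ｓ BSC(r)` expressed purely in
terms of the Bhattacharyya parameters `x = 2√(p(1−p))`, `y = 2√(q(1−q))`, `z = 2√(r(1−r))`:
with `C := (x²y² + (1−x²)z² + (1−y²)z²)/4` and `D := (√(1−x²)·√(1−y²)·z²)/2`, it equals
`√(C+D) + √(C−D)`; moreover `C + D ≥ 0` and `C − D ≥ 0`. -/
theorem stmt_10 (p q r : ℝ) (hp0 : 0 ≤ p) (hp1 : p ≤ 1 / 2)
    (hq0 : 0 ≤ q) (hq1 : q ≤ 1 / 2) (hr0 : 0 ≤ r) (hr1 : r ≤ 1 / 2)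
    (x y z : ℝ)
    (hx : x = 2 * Real.sqrt (p * (1 - p)))
    (hy : y = 2 * Real.sqrt (q * (1 - q)))
    (hz : z = 2 * Real.sqrt (r * (1 - r)))
    (C D : ℝ)
    (hC : C = (x ^ 2 * y ^ 2 + (1 - x ^ 2) * z ^ 2 + (1 - y ^ 2) * z ^ 2) / 4)
    (hD : D = Real.sqrt (1 - x ^ 2) * Real.sqrt (1 - y ^ 2) * z ^ 2 / 2) :
    (2 * Real.sqrt ((p * (1 - q) * (1 - r) + (1 - p) * q * r)
          * (p * (1 - q) * r + (1 - p) * q * (1 - r)))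
        + 2 * Real.sqrt ((p * q * (1 - r) + (1 - p) * (1 - q) * r)
          * (p * q * r + (1 - p) * (1 - q) * (1 - r)))
      = Real.sqrt (C + D) + Real.sqrt (C - D))
    ∧ 0 ≤ C + D ∧ 0 ≤ C - D := by
  have hpp : (0:ℝ) ≤ p * (1 - p) := mul_nonneg hp0 (by linarith)
  have hqq : (0:ℝ) ≤ q * (1 - q) := mul_nonneg hq0 (by linarith)
  have hrr : (0:ℝ) ≤ r * (1 - r) := mul_nonneg hr0 (by linarith)
  have hx2 : x ^ 2 = 4 * (p * (1 - p)) := by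
    rw [hx, mul_pow, Real.sq_sqrt hpp]; ring
  have hy2 : y ^ 2 = 4 * (q * (1 - q)) := by
    rw [hy, mul_pow, Real.sq_sqrt hqq]; ring
  have hz2 : z ^ 2 = 4 * (r * (1 - r)) := by
    rw [hz, mul_pow, Real.sq_sqrt hrr]; ring
  have hsx : Real.sqrt (1 - x ^ 2) = 1 - 2 * p := by
    rw [hx2, show (1:ℝ) - 4 * (p * (1 - p)) = (1 - 2 * p) ^ 2 by ring,
      Real.sqrt_sq (by linarith)]
  have hsy : Real.sqrt (1 - y ^ 2) = 1 - 2 * q := by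
    rw [hy2, show (1:ℝ) - 4 * (q * (1 - q)) = (1 - 2 * q) ^ 2 by ring,
      Real.sqrt_sq (by linarith)]
  set A1 := p * (1 - q) * (1 - r) + (1 - p) * q * r with hA1
  set B1 := p * (1 - q) * r + (1 - p) * q * (1 - r) with hB1
  set A2 := p * q * (1 - r) + (1 - p) * (1 - q) * r with hA2
  set B2 := p * q * r + (1 - p) * (1 - q) * (1 - r) with hB2
  have hA1n : 0 ≤ A1 := by
    have := mul_nonneg (mul_nonneg hp0 (by linarith : (0:ℝ) ≤ 1 - q)) (by linarith : (0:ℝ) ≤ 1 - r)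
    have := mul_nonneg (mul_nonneg (by linarith : (0:ℝ) ≤ 1 - p) hq0) hr0
    rw [hA1]; linarith
  have hB1n : 0 ≤ B1 := by
    have := mul_nonneg (mul_nonneg hp0 (by linarith : (0:ℝ) ≤ 1 - q)) hr0
    have := mul_nonneg (mul_nonneg (by linarith : (0:ℝ) ≤ 1 - p) hq0) (by linarith : (0:ℝ) ≤ 1 - r)
    rw [hB1]; linarith
  have hA2n : 0 ≤ A2 := by
    have := mul_nonneg (mul_nonneg hp0 hq0) (by linarith : (0:ℝ) ≤ 1 - r)
    have := mul_nonneg (mul_nonneg (by linarith : (0:ℝ) ≤ 1 - p) (by linarith : (0:ℝ) ≤ 1 - q)) hr0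
    rw [hA2]; linarith
  have hB2n : 0 ≤ B2 := by
    have := mul_nonneg (mul_nonneg hp0 hq0) hr0
    have := mul_nonneg (mul_nonneg (by linarith : (0:ℝ) ≤ 1 - p) (by linarith : (0:ℝ) ≤ 1 - q))
      (by linarith : (0:ℝ) ≤ 1 - r)
    rw [hB2]; linarith
  have key1 : C - D = 4 * (A1 * B1) := by
    rw [hC, hD, hsx, hsy, hx2, hy2, hz2, hA1, hB1]; ring
  have key2 : C + D = 4 * (A2 * B2) := by
    rw [hC, hD, hsx, hsy, hx2, hy2, hz2, hA2, hB2]; ring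
  have s1 : Real.sqrt (C - D) = 2 * Real.sqrt (A1 * B1) := by
    rw [key1, show (4:ℝ) * (A1 * B1) = 2 ^ 2 * (A1 * B1) by ring,
      Real.sqrt_mul (by positivity), Real.sqrt_sq (by norm_num)]
  have s2 : Real.sqrt (C + D) = 2 * Real.sqrt (A2 * B2) := by
    rw [key2, show (4:ℝ) * (A2 * B2) = 2 ^ 2 * (A2 * B2) by ring,
      Real.sqrt_mul (by positivity), Real.sqrt_sq (by norm_num)]
  refine ⟨by rw [s1, s2]; ring, ?_, ?_⟩
  · rw [key2]; positivity
  · rw [key1]; positivity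
end

section
/- Let n be a positive integer and let g : ℝ³ → ℝ be a function on the cube [0, 1/n]³ such that g vanishes at all eight corners of the cube (i.e., at all points whose coordinates are each 0 or 1/n). Suppose there exist m₁, m₂, m₃ ≥ 0 such that, on the cube, for each fixed (y,z) the map x ↦ g(x,y,z) is twice differentiable with second derivative ≤ m₁, for each fixed (x,z) the map y ↦ g(x,y,z) is twice differentiable with second derivative ≤ m₂, and for each fixed (x,y) the map z ↦ g(x,y,z) is twice differentiable with second derivative ≤ m₃. Then g(x,y,z) ≥ −(m₁ + m₂ + m₃)/(8n²) for all (x,y,z) ∈ [0, 1/n]³. -/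
open Set

lemma oneDim {L : ℝ} (hL : 0 < L) {f d₁ d₂ : ℝ → ℝ} {m c : ℝ} (hm : 0 ≤ m)
    (hd₁ : ∀ x ∈ Icc (0:ℝ) L, HasDerivAt f (d₁ x) x)
    (hd₂ : ∀ x ∈ Icc (0:ℝ) L, HasDerivAt d₁ (d₂ x) x)
    (hbd : ∀ x ∈ Icc (0:ℝ) L, d₂ x ≤ m)
    (h0 : c ≤ f 0) (hLc : c ≤ f L) :
    ∀ x ∈ Icc (0:ℝ) L, c - m * L ^ 2 / 8 ≤ f x := by
  set h : ℝ → ℝ := fun x => f x + m / 2 * (x * (L - x)) with hh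
  have hconc : ConcaveOn ℝ (Icc (0:ℝ) L) h := by
    apply concaveOn_of_hasDerivWithinAt2_nonpos (f' := fun x => d₁ x + m / 2 * (L - 2 * x))
      (f'' := fun x => d₂ x - m) (convex_Icc 0 L)
    · exact fun x hx => ((hd₁ x hx).continuousAt.continuousWithinAt).add
        ((continuous_const.mul (continuous_id.mul (continuous_const.sub continuous_id))).continuousWithinAt)
    · intro x hx
      have hx' : x ∈ Icc (0:ℝ) L := interior_subset hx
      have : HasDerivAt h (d₁ x + m / 2 * (L - 2 * x)) x := by
        have h2 : HasDerivAt (fun x : ℝ => m / 2 * (x * (L - x))) (m / 2 * (L - 2 * x)) x := by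
          have := ((hasDerivAt_id x).mul ((hasDerivAt_const x L).sub (hasDerivAt_id x))).const_mul
            (m / 2)
          simp only [id_eq] at this
          exact this.congr_deriv (by simp only [Pi.sub_apply, id_eq]; ring)
        exact (hd₁ x hx').add h2
      exact this.hasDerivWithinAt
    · intro x hx
      have hx' : x ∈ Icc (0:ℝ) L := interior_subset hx
      have : HasDerivAt (fun x => d₁ x + m / 2 * (L - 2 * x)) (d₂ x - m) x := by
        have h2 : HasDerivAt (fun x : ℝ => m / 2 * (L - 2 * x)) (-m) x := by
          have := (((hasDerivAt_const x L).sub ((hasDerivAt_id x).const_mul 2))).const_mul (m / 2)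
          simp only [id_eq] at this
          exact this.congr_deriv (by ring)
        have := (hd₂ x hx').add h2
        exact this.congr_deriv (by ring)
      exact this.hasDerivWithinAt
    · intro x hx
      have : d₂ x ≤ m := hbd x (interior_subset hx)
      linarith
  intro x hx
  obtain ⟨hx0, hxL⟩ := hx
  have ht0 : 0 ≤ x / L := div_nonneg hx0 hL.le
  have ht1 : x / L ≤ 1 := (div_le_one hL).2 hxL
  have hcomb := hconc.2 (left_mem_Icc.2 hL.le) (right_mem_Icc.2 hL.le)
    (by linarith : (0:ℝ) ≤ 1 - x / L) ht0 (by ring)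
  have hxeq : (1 - x / L) • (0:ℝ) + (x / L) • L = x := by
    simp only [smul_eq_mul]; field_simp; ring
  rw [hxeq] at hcomb
  have h0' : c ≤ h 0 := by simp [hh]; nlinarith
  have hL' : c ≤ h L := by simp [hh]; nlinarith
  have hc : c ≤ h x := by
    calc c = (1 - x / L) * c + (x / L) * c := by ring
    _ ≤ (1 - x / L) * h 0 + (x / L) * h L := by
        apply add_le_add
        · exact mul_le_mul_of_nonneg_left h0' (by linarith)
        · exact mul_le_mul_of_nonneg_left hL' ht0
    _ ≤ h x := hcomb
  have hbd2 : m / 2 * (x * (L - x)) ≤ m * L ^ 2 / 8 := by nlinarith [mul_nonneg hm (sq_nonneg (2*x - L))]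
  simp only [hh] at hc
  linarith

/-- Let `g` vanish at the eight corners of the cube `[0, 1/n]³` and suppose that along
each cardinal direction (the other two coordinates fixed in `[0, 1/n]`) it is twice
differentiable with second derivative bounded above by `m₁`, `m₂`, `m₃ ≥ 0` respectively.
Then `g ≥ −(m₁ + m₂ + m₃)/(8n²)` on the cube. -/
theorem stmt_17 (n : ℕ) (hn : 0 < n) (g : ℝ → ℝ → ℝ → ℝ)
    (hcorners : ∀ x y z : ℝ, (x = 0 ∨ x = 1 / n) → (y = 0 ∨ y = 1 / n) →
      (z = 0 ∨ z = 1 / n) → g x y z = 0)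
    (m₁ m₂ m₃ : ℝ) (hm₁ : 0 ≤ m₁) (hm₂ : 0 ≤ m₂) (hm₃ : 0 ≤ m₃)
    (hx : ∀ y ∈ Set.Icc (0 : ℝ) (1 / n), ∀ z ∈ Set.Icc (0 : ℝ) (1 / n),
      ∃ d₁ d₂ : ℝ → ℝ,
        (∀ x ∈ Set.Icc (0 : ℝ) (1 / n), HasDerivAt (fun x => g x y z) (d₁ x) x) ∧
        (∀ x ∈ Set.Icc (0 : ℝ) (1 / n), HasDerivAt d₁ (d₂ x) x) ∧
        (∀ x ∈ Set.Icc (0 : ℝ) (1 / n), d₂ x ≤ m₁))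
    (hy : ∀ x ∈ Set.Icc (0 : ℝ) (1 / n), ∀ z ∈ Set.Icc (0 : ℝ) (1 / n),
      ∃ d₁ d₂ : ℝ → ℝ,
        (∀ y ∈ Set.Icc (0 : ℝ) (1 / n), HasDerivAt (fun y => g x y z) (d₁ y) y) ∧
        (∀ y ∈ Set.Icc (0 : ℝ) (1 / n), HasDerivAt d₁ (d₂ y) y) ∧
        (∀ y ∈ Set.Icc (0 : ℝ) (1 / n), d₂ y ≤ m₂))
    (hz : ∀ x ∈ Set.Icc (0 : ℝ) (1 / n), ∀ y ∈ Set.Icc (0 : ℝ) (1 / n),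
      ∃ d₁ d₂ : ℝ → ℝ,
        (∀ z ∈ Set.Icc (0 : ℝ) (1 / n), HasDerivAt (fun z => g x y z) (d₁ z) z) ∧
        (∀ z ∈ Set.Icc (0 : ℝ) (1 / n), HasDerivAt d₁ (d₂ z) z) ∧
        (∀ z ∈ Set.Icc (0 : ℝ) (1 / n), d₂ z ≤ m₃)) :
    ∀ x ∈ Set.Icc (0 : ℝ) (1 / n), ∀ y ∈ Set.Icc (0 : ℝ) (1 / n),
      ∀ z ∈ Set.Icc (0 : ℝ) (1 / n),
        g x y z ≥ -((m₁ + m₂ + m₃) / (8 * (n : ℝ) ^ 2)) := by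
  intro p hp q hq r hr
  have hn0 : (n:ℝ) ≠ 0 := Nat.cast_ne_zero.2 hn.ne'
  have hL : (0:ℝ) < 1 / n := by positivity
  set L : ℝ := 1 / n with hLdef
  have h0mem : (0:ℝ) ∈ Set.Icc (0:ℝ) L := Set.left_mem_Icc.2 hL.le
  have hLmem : L ∈ Set.Icc (0:ℝ) L := Set.right_mem_Icc.2 hL.le
  have step1 : ∀ a b : ℝ, (a = 0 ∨ a = L) → (b = 0 ∨ b = L) →
      ∀ w ∈ Set.Icc (0:ℝ) L, -(m₃ * L ^ 2 / 8) ≤ g a b w := by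
    intro a b ha hb w hw
    have hamem : a ∈ Set.Icc (0:ℝ) L := by rcases ha with h | h <;> simp [h, h0mem, hLmem]
    have hbmem : b ∈ Set.Icc (0:ℝ) L := by rcases hb with h | h <;> simp [h, h0mem, hLmem]
    obtain ⟨d₁, d₂, hd₁, hd₂, hbd⟩ := hz a hamem b hbmem
    have := oneDim (c := 0) hL hm₃ hd₁ hd₂ hbd
      (by rw [hcorners a b 0 ha hb (Or.inl rfl)])
      (by rw [hcorners a b L ha hb (Or.inr rfl)]) w hw
    linarith
  have step2 : ∀ a : ℝ, (a = 0 ∨ a = L) →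
      ∀ v ∈ Set.Icc (0:ℝ) L, -(m₃ * L ^ 2 / 8) - m₂ * L ^ 2 / 8 ≤ g a v r := by
    intro a ha v hv
    have hamem : a ∈ Set.Icc (0:ℝ) L := by rcases ha with h | h <;> simp [h, h0mem, hLmem]
    obtain ⟨d₁, d₂, hd₁, hd₂, hbd⟩ := hy a hamem r hr
    have := oneDim (c := -(m₃ * L ^ 2 / 8)) hL hm₂ hd₁ hd₂ hbd
      (step1 a 0 ha (Or.inl rfl) r hr) (step1 a L ha (Or.inr rfl) r hr) v hv
    linarith
  obtain ⟨d₁, d₂, hd₁, hd₂, hbd⟩ := hx q hq r hr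
  have key := oneDim (c := -(m₃ * L ^ 2 / 8) - m₂ * L ^ 2 / 8) hL hm₁ hd₁ hd₂ hbd
    (step2 0 (Or.inl rfl) q hq) (step2 L (Or.inr rfl) q hq) p hp
  have hL2 : L ^ 2 = 1 / (n:ℝ) ^ 2 := by rw [hLdef]; field_simp
  rw [hL2] at key; rw [ge_iff_le]
  have heq : -((m₁ + m₂ + m₃) / (8 * (n : ℝ) ^ 2)) =
      -(m₃ * (1 / (n:ℝ)^2) / 8) - m₂ * (1 / (n:ℝ)^2) / 8 - m₁ * (1 / (n:ℝ)^2) / 8 := by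
    field_simp; ring
  linarith
end
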